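/- Let V be a finite type and E : V → V → Prop a relation with no directed cycles (¬ Relation.TransGen E v v for every v). The following are equivalent: (ii) for every pair of vertices v, w with w reachable from v (Relation.TransGen E v w), there is a directed path γ_M from v to w such that the vertex set of every directed path from v to w is contained in the vertex set of γ_M; (iii) for every topological order f of (V,E) and every pair of vertices v, w with w reachable from v, the list consisting of all vertices that lie on some directed path from v to w, sorted in strictly increasing order of f, is a directed path from v to w (its first element is v, its last element is w, and consecutive elements are related by E). -/

import Mathlib

/-- A directed path of length `k` in `(V, E)`: a map `p : Fin (k+1) → V` with
`E (p i) (p (i+1))` for all `i < k`. -/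
def IsDirPath {V : Type*} (E : V → V → Prop) (k : ℕ) (p : Fin (k + 1) → V) : Prop :=
  ∀ i : Fin k, E (p i.castSucc) (p i.succ)

/-- A directed path of length `k` from `v` to `w`. -/
def IsDirPathFromTo {V : Type*} (E : V → V → Prop) (k : ℕ) (p : Fin (k + 1) → V)
    (v w : V) : Prop :=
  p 0 = v ∧ p (Fin.last k) = w ∧ IsDirPath E k p

/-- A topological order of `(V, E)`: an injective map `f : V → ℕ` with `f u < f v`
whenever `E u v`. -/
def IsTopologicalOrder {V : Type*} (E : V → V → Prop) (f : V → ℕ) : Prop :=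
  Function.Injective f ∧ ∀ u v : V, E u v → f u < f v

/-- `L` is the list of the elements of `S`, sorted in strictly increasing order of `f`. -/
def IsSortedListOf {V : Type*} (f : V → ℕ) (S : Set V) (L : List V) : Prop :=
  (∀ x : V, x ∈ L ↔ x ∈ S) ∧ L.Pairwise fun x y => f x < f y

/-- The list `L` is a directed path from `v` to `w`: its first element is `v`, its last
element is `w`, and consecutive elements are related by `E`. -/
def IsDirPathList {V : Type*} (E : V → V → Prop) (v w : V) (L : List V) : Prop :=
  L.head? = some v ∧ L.getLast? = some w ∧ L.Chain' E

theorem reduced_tfae_ii_iii {V : Type*} [Fintype V] (E : V → V → Prop)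
    (hacyc : ∀ v : V, ¬Relation.TransGen E v v) :
    (∀ v w : V, Relation.TransGen E v w →
        ∃ (m : ℕ) (γM : Fin (m + 1) → V), IsDirPathFromTo E m γM v w ∧
          ∀ (k : ℕ) (γ : Fin (k + 1) → V), IsDirPathFromTo E k γ v w →
            Set.range γ ⊆ Set.range γM) ↔
    (∀ f : V → ℕ, IsTopologicalOrder E f → ∀ v w : V, Relation.TransGen E v w →
        ∀ L : List V,
          IsSortedListOf f {x : V | ∃ (k : ℕ) (γ : Fin (k + 1) → V),
            IsDirPathFromTo E k γ v w ∧ x ∈ Set.range γ} L →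
          IsDirPathList E v w L) := by
  classical
  constructor
  · -- (ii) → (iii)
    rintro hii f hf v w hvw L hL
    obtain ⟨m, γM, hM, hmax⟩ := hii v w hvw
    obtain ⟨hM0, hMl, hMp⟩ := hM
    have hmono : StrictMono (fun i : Fin (m + 1) => f (γM i)) := by
      rw [Fin.strictMono_iff_lt_succ]
      intro i
      exact hf.2 _ _ (hMp i)
    have hrange : {x : V | ∃ (k : ℕ) (γ : Fin (k + 1) → V),
        IsDirPathFromTo E k γ v w ∧ x ∈ Set.range γ} = Set.range γM := by
      ext x
      constructor
      · rintro ⟨k, γ, hγ, hx⟩; exact hmax k γ hγ hx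
      · intro hx; exact ⟨m, γM, ⟨hM0, hMl, hMp⟩, hx⟩
    haveI : IsAntisymm V (fun x y => f x < f y) :=
      ⟨fun a b h1 h2 => absurd (h1.trans h2) (lt_irrefl _)⟩
    have hpw : (List.ofFn γM).Pairwise fun x y => f x < f y := by
      rw [List.pairwise_ofFn]
      intro i j hij
      exact hmono hij
    have hndL : L.Nodup := hL.2.imp fun h => fun he => absurd (he ▸ h) (lt_irrefl _)
    have hndM : (List.ofFn γM).Nodup := hpw.imp fun h => fun he => absurd (he ▸ h) (lt_irrefl _)
    have hperm : L.Perm (List.ofFn γM) := by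
      rw [List.perm_ext_iff_of_nodup hndL hndM]
      intro x
      rw [hL.1 x, hrange, List.mem_ofFn']
    have hLeq : L = List.ofFn γM :=
      List.Perm.eq_of_pairwise' hL.2 hpw hperm
    subst hLeq
    have hne : List.ofFn γM ≠ [] := by
      simp [List.ofFn_eq_nil_iff]
    refine ⟨?_, ?_, ?_⟩
    · rw [List.head?_eq_head hne]
      congr 1
      rw [List.head_eq_getElem, List.getElem_ofFn]
      simpa using hM0
    · rw [List.getLast?_eq_getLast hne]
      congr 1
      rw [List.getLast_eq_getElem, List.getElem_ofFn]
      rw [← hMl]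
      congr 1
      simp [Fin.last, List.length_ofFn]
    · simp only [List.Chain']
      rw [List.isChain_iff_getElem]
      intro i hi
      rw [List.getElem_ofFn, List.getElem_ofFn]
      simp only [List.length_ofFn] at hi
      have := hMp ⟨i, by omega⟩
      convert this using 2 <;> simp [Fin.castSucc, Fin.succ, Fin.cast]
  · -- (iii) → (ii)
    intro hiii v w hvw
    haveI : Nonempty V := ⟨v⟩
    set n := Fintype.card V with hn
    have hn0 : 0 < n := Fintype.card_pos
    set rank : V → ℕ := fun x => Set.ncard {u | Relation.TransGen E u x} with hrank_def
    have hrank : ∀ a b : V, Relation.TransGen E a b → rank a < rank b := by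
      intro a b hab
      apply Set.ncard_lt_ncard _ (Set.toFinite _)
      constructor
      · intro x hx
        exact Relation.TransGen.trans hx hab
      · intro hsub
        exact hacyc a (hsub hab)
    set g : V → ℕ := fun x => ((Fintype.equivFin V) x : ℕ) with hg_def
    have hgb : ∀ x, g x < n := fun x => ((Fintype.equivFin V) x).isLt
    set f : V → ℕ := fun x => n * rank x + g x with hf_def
    have hkey : ∀ a b : V, rank a < rank b → f a < f b := by
      intro a b h
      have : n * rank a + g a < n * (rank a + 1) := by
        have := hgb a; nlinarith
      calc f a < n * (rank a + 1) := this
        _ ≤ n * rank b := Nat.mul_le_mul_left n h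
        _ ≤ f b := Nat.le_add_right _ _
    have hfinj : Function.Injective f := by
      intro a b hab
      rcases lt_trichotomy (rank a) (rank b) with h | h | h
      · exact absurd hab (hkey a b h).ne
      · have : g a = g b := by
          simp only [hf_def, h] at hab
          omega
        exact (Fintype.equivFin V).injective (Fin.ext this)
      · exact absurd hab.symm (hkey b a h).ne
    have htop : IsTopologicalOrder E f :=
      ⟨hfinj, fun a b hab => hkey a b (hrank a b (Relation.TransGen.single hab))⟩
    set S : Set V := {x : V | ∃ (k : ℕ) (γ : Fin (k + 1) → V),
      IsDirPathFromTo E k γ v w ∧ x ∈ Set.range γ} with hS_def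
    haveI : IsTrans V (fun x y => f x ≤ f y) := ⟨fun _ _ _ => le_trans⟩
    haveI : IsAntisymm V (fun x y => f x ≤ f y) :=
      ⟨fun a b h1 h2 => hfinj (le_antisymm h1 h2)⟩
    haveI : IsTotal V (fun x y => f x ≤ f y) := ⟨fun a b => le_total _ _⟩
    set L : List V := Finset.sort (Set.toFinite S).toFinset (fun x y => f x ≤ f y) with hL_def
    have hmem : ∀ x : V, x ∈ L ↔ x ∈ S := by
      intro x
      rw [hL_def, Finset.mem_sort, Set.Finite.mem_toFinset]
    have hsorted : L.Pairwise fun x y => f x < f y := by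
      have h1 : L.Pairwise fun x y => f x ≤ f y := Finset.pairwise_sort _ _
      have h2 : L.Nodup := Finset.sort_nodup _ _
      exact (h1.and h2).imp fun ⟨hle, hne⟩ => lt_of_le_of_ne hle (fun he => hne (hfinj he))
    obtain ⟨hhead, hlast, hchain⟩ := hiii f htop v w hvw L ⟨hmem, hsorted⟩
    have hLne : L ≠ [] := by
      intro h; rw [h] at hhead; simp at hhead
    set m : ℕ := L.length - 1 with hm_def
    have hm : L.length = m + 1 := by
      have := List.length_pos_iff.2 hLne; omega
    refine ⟨m, fun i => L.get (Fin.cast hm.symm i), ⟨?_, ?_, ?_⟩, ?_⟩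
    · have : L.head hLne = v := by
        rw [List.head?_eq_head hLne] at hhead
        exact Option.some_injective _ hhead
      rw [← this, List.head_eq_getElem]
      show L.get (Fin.cast hm.symm 0) = _
      rw [List.get_eq_getElem]
      congr 1
    · have : L.getLast hLne = w := by
        rw [List.getLast?_eq_getLast hLne] at hlast
        exact Option.some_injective _ hlast
      rw [← this, List.getLast_eq_getElem]
      show L.get (Fin.cast hm.symm (Fin.last m)) = _
      rw [List.get_eq_getElem]
      congr 1
    · intro i
      simp only [List.Chain'] at hchain
      rw [List.isChain_iff_getElem] at hchain
      have hi : (i : ℕ) < L.length - 1 := by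
        have := i.isLt; omega
      have := hchain i (by omega)
      convert this using 2 <;> simp [Fin.castSucc, Fin.succ, Fin.cast]
    · intro k γ hγ x hx
      have hxS : x ∈ S := ⟨k, γ, hγ, hx⟩
      rw [← hmem] at hxS
      obtain ⟨j, hj⟩ := List.mem_iff_get.1 hxS
      exact ⟨Fin.cast hm j, by simpa using hj⟩
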